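/- Let G be a connected undirected graph on n nodes with self-loops at every node and A its equal-neighbor update matrix. Fix x ∈ R^n and let i[1],...,i[n] be a permutation sorting the entries of x in nondecreasing order: x_{i[1]} ≤ x_{i[2]} ≤ ... ≤ x_{i[n]}. Then V(Ax) ≤ V(x) − (1/2) Σ_{l=1}^{n−1} (x_{i[l+1]} − x_{i[l]})^2, where V(y) = Σ_i d_i y_i^2. -/

import Mathlib

open Matrix

lemma telescope_aux (n : ℕ) (f : Fin (n+1) → ℝ) (a b : Fin (n+1)) (hab : a ≤ b) :
    ∑ l : Fin n, (if a ≤ l.castSucc ∧ l.succ ≤ b then f l.succ - f l.castSucc else 0)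
      = f b - f a := by
  have hb : (b:ℕ) ≤ n := Nat.lt_succ_iff.mp b.isLt
  set g : ℕ → ℝ := fun m => f ⟨min m n, by omega⟩ with hg
  have key : ∀ l : Fin n, (if a ≤ l.castSucc ∧ l.succ ≤ b then f l.succ - f l.castSucc else 0)
      = (fun m => if (a:ℕ) ≤ m ∧ m + 1 ≤ (b:ℕ) then g (m+1) - g m else 0) ((l : ℕ)) := by
    intro l
    have hl : (l:ℕ) < n := l.isLt
    have h1 : g ((l:ℕ)) = f l.castSucc := by
      simp only [hg]; congr 1; apply Fin.ext; simp; try omega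
    have h2 : g ((l:ℕ)+1) = f l.succ := by
      simp only [hg]; congr 1; apply Fin.ext; simp; try omega
    have hc : (a ≤ l.castSucc ∧ l.succ ≤ b) ↔ ((a:ℕ) ≤ (l:ℕ) ∧ (l:ℕ) + 1 ≤ (b:ℕ)) := by
      simp [Fin.le_def]
    simp only [h1, h2, hc]
  calc ∑ l : Fin n, (if a ≤ l.castSucc ∧ l.succ ≤ b then f l.succ - f l.castSucc else 0)
      = ∑ m ∈ Finset.range n, (if (a:ℕ) ≤ m ∧ m + 1 ≤ (b:ℕ) then g (m+1) - g m else 0) := by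
        rw [← Fin.sum_univ_eq_sum_range]
        exact Finset.sum_congr rfl (fun l _ => key l)
    _ = ∑ m ∈ Finset.Ico (a:ℕ) (b:ℕ), (g (m+1) - g m) := by
        rw [show Finset.Ico (a:ℕ) (b:ℕ)
              = (Finset.range n).filter (fun m => (a:ℕ) ≤ m ∧ m + 1 ≤ (b:ℕ)) by
            ext m
            simp only [Finset.mem_filter, Finset.mem_range, Finset.mem_Ico]
            omega, Finset.sum_filter]
    _ = (g (b:ℕ) - g 0) - (g (a:ℕ) - g 0) := by
        rw [Finset.sum_Ico_eq_sub _ (by exact_mod_cast hab), Finset.sum_range_sub, Finset.sum_range_sub]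
    _ = f b - f a := by
        have e1 : g (b:ℕ) = f b := by
          simp only [hg]; congr 1; apply Fin.ext; simp; try omega
        have e2 : g (a:ℕ) = f a := by
          have ha : (a:ℕ) ≤ n := Nat.lt_succ_iff.mp a.isLt
          simp only [hg]; congr 1; apply Fin.ext; simp; try omega
        rw [e1, e2]; ring

lemma exists_cross {α : Type*} (r : α → α → Prop) (P : α → Prop) {a b : α}
    (h : Relation.ReflTransGen r a b) (ha : P a) :
    ¬ P b → ∃ u v, P u ∧ ¬ P v ∧ r u v := by
  induction h with
  | refl => exact fun hb => absurd ha hb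
  | @tail b' c h1 h2 ih =>
    intro hb
    by_cases hc : P b'
    · exact ⟨b', c, hc, hb, h2⟩
    · exact ih hc


abbrev crossedP (n : ℕ) (σ : Equiv.Perm (Fin (n+1))) (l : Fin n) (j k : Fin (n+1)) : Prop :=
  (σ.symm j ≤ l.castSucc ∧ l.succ ≤ σ.symm k) ∨ (σ.symm k ≤ l.castSucc ∧ l.succ ≤ σ.symm j)

theorem lyapunov_decrease_connected
    (n : ℕ) (N : Fin (n + 1) → Finset (Fin (n + 1)))
    (hsym : ∀ i j, j ∈ N i ↔ i ∈ N j)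
    (hself : ∀ i, i ∈ N i)
    (hconn : ∀ i j, Relation.ReflTransGen (fun a b => b ∈ N a) i j)
    (A : Matrix (Fin (n + 1)) (Fin (n + 1)) ℝ)
    (hA : ∀ i j, A i j = if j ∈ N i then ((N i).card : ℝ)⁻¹ else 0)
    (x : Fin (n + 1) → ℝ) (σ : Equiv.Perm (Fin (n + 1)))
    (hσ : Monotone fun l => x (σ l)) :
    ∑ i, ((N i).card : ℝ) * (A.mulVec x i) ^ 2 ≤
      ∑ i, ((N i).card : ℝ) * (x i) ^ 2 -
        (1 / 2) * ∑ l : Fin n, (x (σ l.succ) - x (σ l.castSucc)) ^ 2 := by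
  classical
  set d : Fin (n+1) → ℝ := fun i => ((N i).card : ℝ) with hd
  set gap : Fin n → ℝ := fun l => x (σ l.succ) - x (σ l.castSucc) with hgapdef
  set P : Fin (n+1) → ℝ := fun i => ∑ j ∈ N i, ∑ k ∈ N i, (x j - x k)^2 with hPdef
  have hdpos : ∀ i, 0 < d i := by
    intro i
    have : 0 < (N i).card := Finset.card_pos.mpr ⟨i, hself i⟩
    simp only [hd]
    exact_mod_cast this
  have hgap0 : ∀ l, 0 ≤ gap l := fun l =>
    sub_nonneg.mpr (hσ (le_of_lt (Fin.castSucc_lt_succ (i := l))))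
  -- Step A : mulVec formula
  have hmv : ∀ i, A.mulVec x i = (d i)⁻¹ * ∑ j ∈ N i, x j := by
    intro i
    calc A.mulVec x i = ∑ j, A i j * x j := rfl
      _ = ∑ j, (if j ∈ N i then (d i)⁻¹ * x j else 0) := by
            refine Finset.sum_congr rfl fun j _ => ?_
            rw [hA]
            split <;> simp [hd]
      _ = ∑ j ∈ N i, (d i)⁻¹ * x j := by
            rw [Finset.sum_ite_mem, Finset.univ_inter]
      _ = (d i)⁻¹ * ∑ j ∈ N i, x j := by rw [Finset.mul_sum]
  -- Step B : the per-node identity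
  have key_i : ∀ i, d i * (A.mulVec x i)^2
      = (∑ j ∈ N i, (x j)^2) - (1/2) * ((d i)⁻¹ * P i) := by
    intro i
    have hP : P i = 2 * (d i * (∑ j ∈ N i, (x j)^2) - (∑ j ∈ N i, x j)^2) := by
      have inner : ∀ j ∈ N i, ∑ k ∈ N i, (x j - x k)^2
          = d i * (x j)^2 - 2 * x j * (∑ k ∈ N i, x k) + ∑ k ∈ N i, (x k)^2 := by
        intro j _
        rw [Finset.sum_congr rfl
          (show ∀ k ∈ N i, (x j - x k)^2 = (x j)^2 - 2 * x j * x k + (x k)^2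
            from fun k _ => by ring)]
        rw [Finset.sum_add_distrib, Finset.sum_sub_distrib, Finset.sum_const,
          ← Finset.mul_sum, nsmul_eq_mul]
        try simp only [hd]
        try ring
      have mid : ∑ j ∈ N i, 2 * x j * (∑ k ∈ N i, x k)
          = 2 * ((∑ j ∈ N i, x j) * (∑ k ∈ N i, x k)) := by
        rw [← Finset.sum_mul, ← Finset.mul_sum]
        ring
      simp only [hPdef]
      rw [Finset.sum_congr rfl inner, Finset.sum_add_distrib, Finset.sum_sub_distrib,
        ← Finset.mul_sum, mid, Finset.sum_const, nsmul_eq_mul]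
      try simp only [hd]
      try ring
    have hdne : d i ≠ 0 := ne_of_gt (hdpos i)
    rw [hmv i, hP]
    field_simp
    ring
  -- Step C : swap of double sum
  have swap : ∑ i, ∑ j ∈ N i, (x j)^2 = ∑ i, d i * (x i)^2 := by
    calc ∑ i, ∑ j ∈ N i, (x j)^2
        = ∑ i, ∑ j, (if j ∈ N i then (x j)^2 else 0) := by
          refine Finset.sum_congr rfl fun i _ => ?_
          rw [Finset.sum_ite_mem, Finset.univ_inter]
      _ = ∑ j, ∑ i, (if j ∈ N i then (x j)^2 else 0) := Finset.sum_comm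
      _ = ∑ j, ∑ i, (if i ∈ N j then (x j)^2 else 0) :=
          Finset.sum_congr rfl fun j _ => Finset.sum_congr rfl fun i _ => if_congr (hsym i j) rfl rfl
      _ = ∑ j, d j * (x j)^2 := by
          refine Finset.sum_congr rfl fun j _ => ?_
          rw [Finset.sum_ite_mem, Finset.univ_inter, Finset.sum_const, nsmul_eq_mul]
  -- Step D : pairwise crossing bound
  have oneside : ∀ a b : Fin (n+1), a ≤ b →
      ∑ l : Fin n, (if a ≤ l.castSucc ∧ l.succ ≤ b then gap l ^ 2 else 0)
        ≤ (x (σ b) - x (σ a))^2 := by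
    intro a b hab
    have e1 : ∀ l : Fin n, (if a ≤ l.castSucc ∧ l.succ ≤ b then gap l ^ 2 else 0)
        = (if a ≤ l.castSucc ∧ l.succ ≤ b then gap l else 0) ^ 2 := by
      intro l; split <;> simp
    rw [Finset.sum_congr rfl (fun l _ => e1 l)]
    have e2 : ∑ l : Fin n, (if a ≤ l.castSucc ∧ l.succ ≤ b then gap l else 0) ^ 2
        ≤ (∑ l : Fin n, (if a ≤ l.castSucc ∧ l.succ ≤ b then gap l else 0)) ^ 2 :=
      Finset.sum_sq_le_sq_sum_of_nonneg (fun l _ => by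
        split
        · exact hgap0 l
        · exact le_rfl)
    have e3 : ∑ l : Fin n, (if a ≤ l.castSucc ∧ l.succ ≤ b
          then x (σ l.succ) - x (σ l.castSucc) else 0) = x (σ b) - x (σ a) :=
      telescope_aux n (fun m => x (σ m)) a b hab
    have e4 : ∑ l : Fin n, (if a ≤ l.castSucc ∧ l.succ ≤ b then gap l else 0)
        = ∑ l : Fin n, (if a ≤ l.castSucc ∧ l.succ ≤ b
            then x (σ l.succ) - x (σ l.castSucc) else 0) :=
      Finset.sum_congr rfl fun l _ => by simp only [hgapdef]
    rw [e4, e3] at e2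
    exact e2
  have pair : ∀ j k : Fin (n+1),
      ∑ l : Fin n, (if crossedP n σ l j k then gap l ^ 2 else 0) ≤ (x j - x k)^2 := by
    intro j k
    rcases le_total (σ.symm j) (σ.symm k) with h | h
    · have hred : ∀ l : Fin n, (if crossedP n σ l j k then gap l ^ 2 else 0)
          = (if σ.symm j ≤ l.castSucc ∧ l.succ ≤ σ.symm k then gap l ^ 2 else 0) := by
        intro l
        by_cases hc : σ.symm j ≤ l.castSucc ∧ l.succ ≤ σ.symm k
        · rw [if_pos (Or.inl hc), if_pos hc]
        · rw [if_neg hc, if_neg]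
          rintro (h1 | h2)
          · exact hc h1
          · have hle : l.succ ≤ l.castSucc := le_trans h2.2 (le_trans h h2.1)
            exact absurd hle (not_le.mpr (Fin.castSucc_lt_succ (i := l)))
      rw [Finset.sum_congr rfl (fun l _ => hred l)]
      calc ∑ l : Fin n, (if σ.symm j ≤ l.castSucc ∧ l.succ ≤ σ.symm k then gap l ^ 2 else 0)
          ≤ (x (σ (σ.symm k)) - x (σ (σ.symm j)))^2 := oneside _ _ h
        _ = (x j - x k)^2 := by rw [Equiv.apply_symm_apply, Equiv.apply_symm_apply]; ring
    · have hred : ∀ l : Fin n, (if crossedP n σ l j k then gap l ^ 2 else 0)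
          = (if σ.symm k ≤ l.castSucc ∧ l.succ ≤ σ.symm j then gap l ^ 2 else 0) := by
        intro l
        by_cases hc : σ.symm k ≤ l.castSucc ∧ l.succ ≤ σ.symm j
        · rw [if_pos (Or.inr hc), if_pos hc]
        · rw [if_neg hc, if_neg]
          rintro (h1 | h2)
          · have hle : l.succ ≤ l.castSucc := le_trans h1.2 (le_trans h h1.1)
            exact absurd hle (not_le.mpr (Fin.castSucc_lt_succ (i := l)))
          · exact hc h2
      rw [Finset.sum_congr rfl (fun l _ => hred l)]
      calc ∑ l : Fin n, (if σ.symm k ≤ l.castSucc ∧ l.succ ≤ σ.symm j then gap l ^ 2 else 0)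
          ≤ (x (σ (σ.symm j)) - x (σ (σ.symm k)))^2 := oneside _ _ h
        _ = (x j - x k)^2 := by rw [Equiv.apply_symm_apply, Equiv.apply_symm_apply]
  -- Step E : per-cut witness bound
  have cut : ∀ l : Fin n, gap l ^ 2 ≤
      ∑ i, (d i)⁻¹ * (∑ j ∈ N i, ∑ k ∈ N i, if crossedP n σ l j k then gap l ^ 2 else 0) := by
    intro l
    have hg : 0 ≤ gap l ^ 2 := sq_nonneg _
    obtain ⟨u, v, hu, hv, huv⟩ := exists_cross (fun a b => b ∈ N a)
      (fun j => σ.symm j ≤ l.castSucc) (hconn (σ l.castSucc) (σ l.succ))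
      (by simp only [Equiv.symm_apply_apply]; exact le_rfl)
      (by simp only [Equiv.symm_apply_apply]; exact not_le.mpr (Fin.castSucc_lt_succ (i := l)))
    have hSf1 : 1 ≤ ((N u).filter (fun j => σ.symm j ≤ l.castSucc)).card :=
      Finset.card_pos.mpr ⟨u, Finset.mem_filter.mpr ⟨hself u, hu⟩⟩
    have hTf1 : 1 ≤ ((N u).filter (fun j => ¬ σ.symm j ≤ l.castSucc)).card :=
      Finset.card_pos.mpr ⟨v, Finset.mem_filter.mpr ⟨huv, hv⟩⟩
    have hcard : ((N u).filter (fun j => σ.symm j ≤ l.castSucc)).card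
        + ((N u).filter (fun j => ¬ σ.symm j ≤ l.castSucc)).card = (N u).card :=
      Finset.card_filter_add_card_filter_not _
    have per : ∀ j k : Fin (n+1),
        (if (σ.symm j ≤ l.castSucc ∧ ¬ σ.symm k ≤ l.castSucc) then gap l ^ 2 else 0)
          + (if (¬ σ.symm j ≤ l.castSucc ∧ σ.symm k ≤ l.castSucc) then gap l ^ 2 else 0)
          ≤ (if crossedP n σ l j k then gap l ^ 2 else 0) := by
      intro j k
      by_cases h1 : σ.symm j ≤ l.castSucc <;> by_cases h2 : σ.symm k ≤ l.castSucc
      · rw [if_neg (by tauto), if_neg (by tauto), add_zero]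
        split
        · exact hg
        · exact le_rfl
      · rw [if_pos ⟨h1, h2⟩, if_neg (by tauto), add_zero,
          if_pos (Or.inl ⟨h1, Fin.castSucc_lt_iff_succ_le.mp (lt_of_not_ge h2)⟩)]
      · rw [if_neg (by tauto), if_pos ⟨h1, h2⟩, zero_add,
          if_pos (Or.inr ⟨h2, Fin.castSucc_lt_iff_succ_le.mp (lt_of_not_ge h1)⟩)]
      · rw [if_neg (by tauto), if_neg (by tauto), add_zero]
        split
        · exact hg
        · exact le_rfl
    have factor : ∀ (p q : Fin (n+1) → Prop) (_ : DecidablePred p) (_ : DecidablePred q),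
        ∑ j ∈ N u, ∑ k ∈ N u, (if p j ∧ q k then gap l ^ 2 else 0)
          = (((N u).filter p).card : ℝ) * ((((N u).filter q).card : ℝ) * gap l ^ 2) := by
      intro p q _ _
      have e : ∀ j k : Fin (n+1), (if p j ∧ q k then gap l ^ 2 else 0)
          = (if p j then (1:ℝ) else 0) * ((if q k then (1:ℝ) else 0) * gap l ^ 2) := by
        intro j k
        by_cases hp : p j <;> by_cases hq : q k <;> simp [hp, hq]
      calc ∑ j ∈ N u, ∑ k ∈ N u, (if p j ∧ q k then gap l ^ 2 else 0)
          = ∑ j ∈ N u, (if p j then (1:ℝ) else 0)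
              * ∑ k ∈ N u, ((if q k then (1:ℝ) else 0) * gap l ^ 2) := by
            refine Finset.sum_congr rfl fun j _ => ?_
            rw [Finset.mul_sum]
            exact Finset.sum_congr rfl fun k _ => e j k
        _ = (∑ j ∈ N u, if p j then (1:ℝ) else 0)
              * ((∑ k ∈ N u, if q k then (1:ℝ) else 0) * gap l ^ 2) := by
            rw [← Finset.sum_mul, ← Finset.sum_mul]
        _ = (((N u).filter p).card : ℝ) * ((((N u).filter q).card : ℝ) * gap l ^ 2) := by
            rw [Finset.sum_boole, Finset.sum_boole]
    have step : (((N u).filter (fun j => σ.symm j ≤ l.castSucc)).card : ℝ)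
          * ((((N u).filter (fun j => ¬ σ.symm j ≤ l.castSucc)).card : ℝ) * gap l ^ 2)
        + (((N u).filter (fun j => ¬ σ.symm j ≤ l.castSucc)).card : ℝ)
          * ((((N u).filter (fun j => σ.symm j ≤ l.castSucc)).card : ℝ) * gap l ^ 2)
        ≤ ∑ j ∈ N u, ∑ k ∈ N u, (if crossedP n σ l j k then gap l ^ 2 else 0) := by
      have expand : ∑ j ∈ N u, ∑ k ∈ N u,
          ((if (σ.symm j ≤ l.castSucc ∧ ¬ σ.symm k ≤ l.castSucc) then gap l ^ 2 else 0)
            + (if (¬ σ.symm j ≤ l.castSucc ∧ σ.symm k ≤ l.castSucc) then gap l ^ 2 else 0))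
          ≤ ∑ j ∈ N u, ∑ k ∈ N u, (if crossedP n σ l j k then gap l ^ 2 else 0) :=
        Finset.sum_le_sum fun j _ => Finset.sum_le_sum fun k _ => per j k
      rw [show ∑ j ∈ N u, ∑ k ∈ N u,
          ((if (σ.symm j ≤ l.castSucc ∧ ¬ σ.symm k ≤ l.castSucc) then gap l ^ 2 else 0)
            + (if (¬ σ.symm j ≤ l.castSucc ∧ σ.symm k ≤ l.castSucc) then gap l ^ 2 else 0))
          = ∑ j ∈ N u, ∑ k ∈ N u,
              (if (σ.symm j ≤ l.castSucc ∧ ¬ σ.symm k ≤ l.castSucc) then gap l ^ 2 else 0)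
            + ∑ j ∈ N u, ∑ k ∈ N u,
              (if (¬ σ.symm j ≤ l.castSucc ∧ σ.symm k ≤ l.castSucc) then gap l ^ 2 else 0) by
          rw [← Finset.sum_add_distrib]
          exact Finset.sum_congr rfl fun j _ => Finset.sum_add_distrib] at expand
      rwa [factor (fun j => σ.symm j ≤ l.castSucc) (fun k => ¬ σ.symm k ≤ l.castSucc)
          inferInstance inferInstance,
        factor (fun j => ¬ σ.symm j ≤ l.castSucc) (fun k => σ.symm k ≤ l.castSucc)
          inferInstance inferInstance] at expand
    have hu_term : gap l ^ 2 ≤ (d u)⁻¹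
        * (∑ j ∈ N u, ∑ k ∈ N u, if crossedP n σ l j k then gap l ^ 2 else 0) := by
      set a : ℝ := (((N u).filter (fun j => σ.symm j ≤ l.castSucc)).card : ℝ) with ha
      set b : ℝ := (((N u).filter (fun j => ¬ σ.symm j ≤ l.castSucc)).card : ℝ) with hb
      have ha1 : (1:ℝ) ≤ a := by simp only [ha]; exact_mod_cast hSf1
      have hb1 : (1:ℝ) ≤ b := by simp only [hb]; exact_mod_cast hTf1
      have hdu : d u = a + b := by
        simp only [hd, ha, hb]
        rw [← hcard]
        push_cast
        ring
      have h2ab : d u * gap l ^ 2 ≤ a * (b * gap l ^ 2) + b * (a * gap l ^ 2) := by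
        rw [hdu]
        nlinarith [mul_le_mul_of_nonneg_right (show a + b ≤ 2 * (a * b) by nlinarith) hg]
      have hfin : d u * gap l ^ 2
          ≤ ∑ j ∈ N u, ∑ k ∈ N u, (if crossedP n σ l j k then gap l ^ 2 else 0) :=
        le_trans h2ab step
      have hinv : (0:ℝ) ≤ (d u)⁻¹ := inv_nonneg.mpr (hdpos u).le
      calc gap l ^ 2 = (d u)⁻¹ * (d u * gap l ^ 2) := by
            rw [← mul_assoc, inv_mul_cancel₀ (ne_of_gt (hdpos u)), one_mul]
        _ ≤ (d u)⁻¹ * (∑ j ∈ N u, ∑ k ∈ N u,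
              (if crossedP n σ l j k then gap l ^ 2 else 0)) :=
            mul_le_mul_of_nonneg_left hfin hinv
    refine le_trans hu_term (Finset.single_le_sum
      (f := fun i => (d i)⁻¹ * (∑ j ∈ N i, ∑ k ∈ N i,
        if crossedP n σ l j k then gap l ^ 2 else 0))
      (fun i _ => ?_) (Finset.mem_univ u))
    refine mul_nonneg (inv_nonneg.mpr (hdpos _).le) ?_
    refine Finset.sum_nonneg fun j _ => Finset.sum_nonneg fun k _ => ?_
    split
    · exact hg
    · exact le_rfl
  -- Assemble
  have step1 : ∀ i, ∑ l : Fin n,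
      (∑ j ∈ N i, ∑ k ∈ N i, if crossedP n σ l j k then gap l ^ 2 else 0) ≤ P i := by
    intro i
    calc ∑ l : Fin n, ∑ j ∈ N i, ∑ k ∈ N i, (if crossedP n σ l j k then gap l ^ 2 else 0)
        = ∑ j ∈ N i, ∑ l : Fin n, ∑ k ∈ N i,
            (if crossedP n σ l j k then gap l ^ 2 else 0) := Finset.sum_comm
      _ = ∑ j ∈ N i, ∑ k ∈ N i, ∑ l : Fin n,
            (if crossedP n σ l j k then gap l ^ 2 else 0) :=
          Finset.sum_congr rfl fun j _ => Finset.sum_comm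
      _ ≤ ∑ j ∈ N i, ∑ k ∈ N i, (x j - x k)^2 :=
          Finset.sum_le_sum fun j _ => Finset.sum_le_sum fun k _ => pair j k
      _ = P i := by simp only [hPdef]
  have chain : ∑ l : Fin n, gap l ^ 2 ≤ ∑ i, (d i)⁻¹ * P i := by
    calc ∑ l : Fin n, gap l ^ 2
        ≤ ∑ l : Fin n, ∑ i, (d i)⁻¹
            * (∑ j ∈ N i, ∑ k ∈ N i, if crossedP n σ l j k then gap l ^ 2 else 0) :=
          Finset.sum_le_sum fun l _ => cut l
      _ = ∑ i, ∑ l : Fin n, (d i)⁻¹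
            * (∑ j ∈ N i, ∑ k ∈ N i, if crossedP n σ l j k then gap l ^ 2 else 0) :=
          Finset.sum_comm
      _ = ∑ i, (d i)⁻¹ * ∑ l : Fin n,
            (∑ j ∈ N i, ∑ k ∈ N i, if crossedP n σ l j k then gap l ^ 2 else 0) :=
          Finset.sum_congr rfl fun i _ => (Finset.mul_sum _ _ _).symm
      _ ≤ ∑ i, (d i)⁻¹ * P i :=
          Finset.sum_le_sum fun i _ =>
            mul_le_mul_of_nonneg_left (step1 i) (inv_nonneg.mpr (hdpos i).le)
  have total : ∑ i, d i * (A.mulVec x i)^2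
      = (∑ i, d i * (x i)^2) - (1/2) * ∑ i, (d i)⁻¹ * P i := by
    rw [Finset.sum_congr rfl fun i _ => key_i i, Finset.sum_sub_distrib, swap, ← Finset.mul_sum]
  calc ∑ i, ((N i).card : ℝ) * (A.mulVec x i) ^ 2
      = ∑ i, d i * (A.mulVec x i)^2 := rfl
    _ = (∑ i, d i * (x i)^2) - (1/2) * ∑ i, (d i)⁻¹ * P i := total
    _ ≤ (∑ i, d i * (x i)^2) - (1/2) * ∑ l : Fin n, gap l ^ 2 := by linarith [chain]
    _ = ∑ i, ((N i).card : ℝ) * (x i) ^ 2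
        - (1 / 2) * ∑ l : Fin n, (x (σ l.succ) - x (σ l.castSucc)) ^ 2 := rfl
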